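/- arXiv:1804.02738 — 3 statements merged into one kernel-verified Lean document; each statement's English description precedes it below -/
import Mathlib

section
/- For σ > 0 and c > 0, the function φ_c(x) = (2c(σ+1)/(σ²(cx)²+1))^{1/(2σ)} solves the ODE -φ'' + (c/2)φ^{2σ+1} - ((2σ+1)/(2σ+2)²)φ^{4σ+1} = 0 on ℝ. -/
noncomputable def phi (σ c x : ℝ) : ℝ :=
  (2*c*(σ+1) / (σ^2 * (c*x)^2 + 1)) ^ (1/(2*σ))

theorem stmt2 (σ c : ℝ) (hσ : 0 < σ) (hc : 0 < c) (x : ℝ) :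
    -(deriv (deriv (phi σ c)) x) + (c/2) * (phi σ c x) ^ (2*σ + 1)
      - ((2*σ + 1)/(2*σ + 2)^2) * (phi σ c x) ^ (4*σ + 1) = 0 := by
  set p : ℝ := 1/(2*σ) with hp
  set A : ℝ := 2*c*(σ+1) with hA
  have hApos : 0 < A := by rw [hA]; positivity
  have hB : ∀ y : ℝ, (0:ℝ) < σ^2 * (c*y)^2 + 1 := fun y => by positivity
  have hphi : ∀ y, phi σ c y = A ^ p * (σ^2 * (c*y)^2 + 1) ^ (-p) := by
    intro y
    rw [phi, Real.div_rpow hApos.le (hB y).le, Real.rpow_neg (hB y).le, div_eq_mul_inv]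
  have hBd : ∀ y : ℝ, HasDerivAt (fun z => σ^2 * (c*z)^2 + 1) (2*σ^2*c^2*y) y := by
    intro y
    have h := ((((hasDerivAt_id y).const_mul c).pow 2).const_mul (σ^2)).add_const (1:ℝ)
    simp only [id_eq] at h
    refine h.congr_deriv ?_
    push_cast; ring
  have hD1 : ∀ y, HasDerivAt (phi σ c)
      (A ^ p * ((2*σ^2*c^2*y) * (-p) * (σ^2 * (c*y)^2 + 1) ^ (-p - 1))) y := by
    intro y
    have h := ((hBd y).rpow_const (p := -p) (Or.inl (hB y).ne')).const_mul (A ^ p)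
    have hfun : phi σ c = fun z => A ^ p * (σ^2 * (c*z)^2 + 1) ^ (-p) := funext hphi
    rw [hfun]
    convert h using 1
  have hderiv1 : deriv (phi σ c) = fun y =>
      A ^ p * ((2*σ^2*c^2*y) * (-p) * (σ^2 * (c*y)^2 + 1) ^ (-p - 1)) :=
    funext fun y => (hD1 y).deriv
  have hD2 : HasDerivAt (fun y =>
      A ^ p * ((2*σ^2*c^2*y) * (-p) * (σ^2 * (c*y)^2 + 1) ^ (-p - 1)))
      (A ^ p * ((2*σ^2*c^2*(-p)) * (σ^2 * (c*x)^2 + 1) ^ (-p - 1)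
        + (2*σ^2*c^2*x*(-p)) * ((2*σ^2*c^2*x) * (-p-1) * (σ^2 * (c*x)^2 + 1) ^ (-p - 2)))) x := by
    have hg : HasDerivAt (fun y : ℝ => 2*σ^2*c^2*y * (-p)) (2*σ^2*c^2*(-p)) x := by
      have := ((hasDerivAt_id x).const_mul (2*σ^2*c^2)).mul_const (-p)
      simpa using this
    have hh : HasDerivAt (fun y : ℝ => (σ^2 * (c*y)^2 + 1) ^ (-p - 1))
        ((2*σ^2*c^2*x) * (-p-1) * (σ^2 * (c*x)^2 + 1) ^ (-p - 1 - 1)) x :=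
      (hBd x).rpow_const (p := -p-1) (Or.inl (hB x).ne')
    have := (hg.mul hh).const_mul (A ^ p)
    refine this.congr_deriv ?_
    ring_nf
  have hd2 : deriv (deriv (phi σ c)) x
      = A ^ p * ((2*σ^2*c^2*(-p)) * (σ^2 * (c*x)^2 + 1) ^ (-p - 1)
        + (2*σ^2*c^2*x*(-p)) * ((2*σ^2*c^2*x) * (-p-1) * (σ^2 * (c*x)^2 + 1) ^ (-p - 2))) := by
    rw [hderiv1]; exact hD2.deriv
  set Bx : ℝ := σ^2 * (c*x)^2 + 1 with hBx
  have hBxpos : 0 < Bx := hB x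
  set u : ℝ := A ^ p with hu
  set v : ℝ := Bx ^ (-p - 2) with hv
  have e1 : Bx ^ (-p - 1) = v * Bx := by
    rw [hv, show (-p-1 : ℝ) = (-p-2)+1 by ring, Real.rpow_add hBxpos, Real.rpow_one]
  have hAB : (0:ℝ) ≤ A / Bx := by positivity
  have hpow : ∀ q : ℝ, (phi σ c x) ^ q = (A / Bx) ^ (p * q) := by
    intro q
    rw [show phi σ c x = (A / Bx) ^ p from rfl, ← Real.rpow_mul hAB]
  have key : ∀ q : ℝ, (A / Bx) ^ q = A ^ q * Bx ^ (-q) := by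
    intro q
    rw [Real.div_rpow hApos.le hBxpos.le, Real.rpow_neg hBxpos.le, div_eq_mul_inv]
  have hq1 : p * (2*σ + 1) = p + 1 := by
    rw [hp]; field_simp; ring
  have hq2 : p * (4*σ + 1) = p + 2 := by
    rw [hp]; field_simp; ring
  have e2 : (phi σ c x) ^ (2*σ + 1) = u * A * (v * Bx) := by
    rw [hpow, hq1, key, Real.rpow_add hApos, Real.rpow_one,
      show (-(p+1) : ℝ) = (-p-2)+1 by ring, Real.rpow_add hBxpos, Real.rpow_one, hu, hv]
    try ring
  have e3 : (phi σ c x) ^ (4*σ + 1) = u * A^2 * v := by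
    rw [hpow, hq2, key, show ((p:ℝ)+2) = p+1+1 by ring, Real.rpow_add hApos,
      Real.rpow_add hApos, Real.rpow_one, show (-(p+1+1) : ℝ) = -p-2 by ring, hu, hv]
    try ring
  rw [hd2, e1, e2, e3, hBx, hp, hA]
  have h2σ : (2*σ) ≠ 0 := by positivity
  have h2σ2 : (2*σ+2) ≠ 0 := by positivity
  field_simp
  ring
end

section
/- For σ ∈ (1,2) and c > 0, let φ_c(x) = (2c(σ+1)/(σ²(cx)²+1))^{1/(2σ)} and define P(c) = -(c/2)·(1/2)∫φ_c² dx + (1/(2(2σ+2)))∫φ_c^{2σ+2} dx and M(c) = (1/2)∫φ_c² dx. Then P(c) = ((1-σ)/2) c M(c). -/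
open MeasureTheory

noncomputable def Mass (σ c : ℝ) : ℝ := (1/2) * ∫ x : ℝ, (phi σ c x)^2

noncomputable def Mom (σ c : ℝ) : ℝ :=
  -(c/2) * ((1/2) * ∫ x : ℝ, (phi σ c x)^2)
    + (1/(2*(2*σ+2))) * ∫ x : ℝ, (phi σ c x) ^ (2*σ + 2)

open Filter Real Topology in
lemma integ_aux (b q : ℝ) (hb : 0 < b) (hq : 1/2 < q) :
    Integrable (fun x : ℝ => ((b*x)^2+1) ^ (-q)) := by
  have h0 : Integrable (fun x : ℝ => ((1:ℝ) + ‖x‖^2) ^ (-(2*q)/2)) :=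
    integrable_rpow_neg_one_add_norm_sq (by simp [Module.finrank_self]; linarith)
  have h1 : Integrable (fun x : ℝ => ((1:ℝ) + ‖b*x‖^2) ^ (-(2*q)/2)) :=
    (integrable_comp_mul_left_iff _ hb.ne').2 h0
  refine h1.congr (Eventually.of_forall fun x => ?_)
  simp only [Real.norm_eq_abs, sq_abs]
  rw [add_comm]
  congr 1
  ring

open Filter Real Topology in
lemma rec_aux (b q : ℝ) (hb : 0 < b) (hq : 1/2 < q) :
    2*q * ∫ x : ℝ, ((b*x)^2+1) ^ (-(q+1)) = (2*q-1) * ∫ x : ℝ, ((b*x)^2+1) ^ (-q) := by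
  set F : ℝ → ℝ := fun x => x * ((b*x)^2+1) ^ (-q) with hF
  have key : ∀ x : ℝ, HasDerivAt F
      ((1-2*q)*((b*x)^2+1)^(-q) + 2*q*((b*x)^2+1)^(-(q+1))) x := by
    intro x
    have hDpos : (0:ℝ) < (b*x)^2+1 := by positivity
    have h1 : HasDerivAt (fun y : ℝ => (b*y)^2+1) (2*b^2*x) x := by
      have := (((hasDerivAt_id x).const_mul b).fun_pow 2).add_const 1
      refine HasDerivAt.congr_deriv this (Eq.symm ?_)
      simp [id]
      ring
    have h2 := h1.rpow_const (p := -q) (Or.inl hDpos.ne')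
    have h3 := (hasDerivAt_id x).fun_mul h2
    refine HasDerivAt.congr_deriv h3 (Eq.symm ?_)
    have e1 : ((b*x)^2+1)^(-q) = ((b*x)^2+1) * ((b*x)^2+1)^(-q-1) := by
      have h := Real.rpow_add hDpos 1 (-q-1)
      rw [Real.rpow_one, show (1:ℝ) + (-q-1) = -q by ring] at h
      exact h
    simp only [id_eq]
    rw [show -(q+1) = -q-1 by ring]
    linear_combination (-(2*q)) * e1
  have htop : Tendsto F atTop (𝓝 0) := by
    have hlim : Tendsto (fun x : ℝ => b^(-(2*q)) * x^(-(2*q-1))) atTop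
        (𝓝 (b^(-(2*q)) * 0)) :=
      (tendsto_rpow_neg_atTop (by linarith)).const_mul _
    rw [mul_zero] at hlim
    refine squeeze_zero' ?_ ?_ hlim
    · filter_upwards [eventually_gt_atTop (0:ℝ)] with x hx
      have : (0:ℝ) < ((b*x)^2+1)^(-q) := by positivity
      positivity
    · filter_upwards [eventually_gt_atTop (0:ℝ)] with x hx
      have hbx : (0:ℝ) < b*x := by positivity
      have hle : ((b*x)^2+1)^(-q) ≤ ((b*x)^2)^(-q) := by
        apply Real.rpow_le_rpow_of_nonpos (by positivity) (by linarith) (by linarith)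
      have e2 : ((b*x)^2)^(-q) = b^(-(2*q)) * x^(-(2*q)) := by
        rw [← Real.rpow_natCast (b*x) 2, ← Real.rpow_mul hbx.le,
          Real.mul_rpow hb.le hx.le]
        norm_num
      calc F x ≤ x * ((b*x)^2)^(-q) := by
                  exact mul_le_mul_of_nonneg_left hle hx.le
        _ = b^(-(2*q)) * x^(-(2*q-1)) := by
            rw [e2, show -(2*q-1) = 1 + (-(2*q)) by ring, Real.rpow_add hx,
              Real.rpow_one]
            ring
  have hbot : Tendsto F atBot (𝓝 0) := by
    have h := htop.comp tendsto_neg_atBot_atTop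
    have heq : (F ∘ fun x : ℝ => -x) = fun x => -F x := by
      funext x
      show -x * ((b*(-x))^2+1)^(-q) = -(x * ((b*x)^2+1)^(-q))
      rw [show (b*(-x))^2 = (b*x)^2 by ring]
      ring
    rw [heq] at h
    simpa using h.neg
  have hint1 := integ_aux b q hb hq
  have hint2 := integ_aux b (q+1) hb (by linarith)
  have hf' : Integrable (fun x : ℝ =>
      (1-2*q)*((b*x)^2+1)^(-q) + 2*q*((b*x)^2+1)^(-(q+1))) :=
    (hint1.const_mul _).add (hint2.const_mul _)
  have h0 := integral_of_hasDerivAt_of_tendsto key hf' hbot htop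
  rw [integral_add (hint1.const_mul _) (hint2.const_mul _), integral_const_mul,
    integral_const_mul] at h0
  simp only [sub_zero, sub_self] at h0
  linarith

theorem stmt6 (σ c : ℝ) (hσ : σ ∈ Set.Ioo (1:ℝ) 2) (hc : 0 < c) :
    Mom σ c = ((1 - σ)/2) * c * Mass σ c := by
  obtain ⟨hσ1, hσ2⟩ := hσ
  have hσ0 : (0:ℝ) < σ := by linarith
  set A : ℝ := 2*c*(σ+1) with hA
  have hApos : 0 < A := by positivity
  set b : ℝ := σ*c with hb
  have hbpos : 0 < b := by positivity
  set p : ℝ := 1/σ with hp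
  have hppos : 0 < p := by positivity
  have hph : 1/2 < p := by
    rw [hp, div_lt_div_iff₀ (by norm_num) hσ0]
    linarith
  have hDpos : ∀ x : ℝ, (0:ℝ) < (b*x)^2+1 := fun x => by positivity
  have h1 : ∀ x : ℝ, phi σ c x ^ 2 = A^p * ((b*x)^2+1)^(-p) := by
    intro x
    have hD : σ^2 * (c*x)^2 + 1 = (b*x)^2+1 := by rw [hb]; ring
    rw [phi, hD, ← Real.rpow_natCast _ 2, ← Real.rpow_mul (by positivity),
      show (1/(2*σ)) * ((2:ℕ):ℝ) = p by rw [hp]; push_cast; field_simp,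
      Real.div_rpow hApos.le (hDpos x).le, div_eq_mul_inv,
      ← Real.rpow_neg (hDpos x).le]
  have h2 : ∀ x : ℝ, phi σ c x ^ (2*σ+2) = A^(p+1) * ((b*x)^2+1)^(-(p+1)) := by
    intro x
    have hD : σ^2 * (c*x)^2 + 1 = (b*x)^2+1 := by rw [hb]; ring
    rw [phi, hD, ← Real.rpow_mul (by positivity),
      show (1/(2*σ)) * (2*σ+2) = p+1 by rw [hp]; field_simp; ring,
      Real.div_rpow hApos.le (hDpos x).le, div_eq_mul_inv,
      ← Real.rpow_neg (hDpos x).le]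
  set J : ℝ := ∫ x : ℝ, ((b*x)^2+1)^(-p) with hJ
  set J1 : ℝ := ∫ x : ℝ, ((b*x)^2+1)^(-(p+1)) with hJ1
  have hrec := rec_aux b p hbpos hph
  rw [← hJ, ← hJ1] at hrec
  have hJ1eq : J1 = (2*p-1)/(2*p) * J := by
    field_simp
    linarith
  have hI1 : (∫ x : ℝ, phi σ c x ^ 2) = A^p * J := by
    simp_rw [h1]
    rw [integral_const_mul, hJ]
  have hI2 : (∫ x : ℝ, phi σ c x ^ (2*σ+2)) = A^(p+1) * J1 := by
    simp_rw [h2]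
    rw [integral_const_mul, hJ1]
  rw [Mom, Mass, hI1, hI2, hJ1eq, Real.rpow_add hApos, Real.rpow_one]
  have hp0 : p ≠ 0 := hppos.ne'
  rw [hA, hp]
  field_simp
  ring
end

section
/- Let σ ∈ (1,2), c > 0, and let Φ_c be the complex endpoint soliton profile of gDNLS. Then ‖∂ₓΦ_c‖_{L²}² = (c²/4)‖Φ_c‖_{L²}². -/
open MeasureTheory Complex

noncomputable def Phi (σ c : ℝ) (x : ℝ) : ℂ :=
  (phi σ c x : ℂ) *
    Complex.exp (Complex.I * ((c/2) * x : ℝ)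
      - (Complex.I / (2*σ + 2)) * ((∫ y in Set.Iio x, (phi σ c y) ^ (2*σ) : ℝ) : ℂ))

namespace Stmt10Aux

/-- the function `g = φ^{2σ}` -/
noncomputable def g (σ c x : ℝ) : ℝ := 2*c*(σ+1) / (σ^2 * (c*x)^2 + 1)

lemma denom_pos (σ c x : ℝ) : 0 < σ^2 * (c*x)^2 + 1 := by positivity

lemma g_pos {σ c : ℝ} (hσ : 0 < σ) (hc : 0 < c) (x : ℝ) : 0 < g σ c x :=
  div_pos (by positivity) (denom_pos σ c x)

lemma phi_eq (σ c x : ℝ) : phi σ c x = (g σ c x) ^ (1/(2*σ)) := rfl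

lemma phi_pos {σ c : ℝ} (hσ : 0 < σ) (hc : 0 < c) (x : ℝ) : 0 < phi σ c x :=
  Real.rpow_pos_of_pos (g_pos hσ hc x) _

lemma phi_rpow {σ c : ℝ} (hσ : 0 < σ) (hc : 0 < c) (x : ℝ) :
    (phi σ c x) ^ (2*σ) = g σ c x := by
  rw [phi_eq, ← Real.rpow_mul (g_pos hσ hc x).le]
  have h : 1/(2*σ) * (2*σ) = 1 := by field_simp
  rw [h, Real.rpow_one]

lemma hasDerivAt_g {σ c : ℝ} (x : ℝ) :
    HasDerivAt (g σ c) ((0 * (σ^2*(c*x)^2+1) - 2*c*(σ+1) * (σ^2*c^2*(2*x)))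
      / (σ^2*(c*x)^2+1)^2) x := by
  have hd : HasDerivAt (fun x : ℝ => σ^2*(c*x)^2 + 1) (σ^2*c^2*(2*x)) x := by
    have h : HasDerivAt (fun x : ℝ => σ^2*c^2*x^2 + 1) (σ^2*c^2*(2*x^1)) x :=
      ((hasDerivAt_pow 2 x).const_mul (σ^2*c^2)).add_const 1
    have he : (fun x : ℝ => σ^2*(c*x)^2 + 1) = fun x : ℝ => σ^2*c^2*x^2 + 1 := by
      funext y; ring
    rw [he]
    simpa using h
  exact (hasDerivAt_const x (2*c*(σ+1))).div hd (denom_pos σ c x).ne'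

lemma hasDerivAt_phi {σ c : ℝ} (hσ : 0 < σ) (hc : 0 < c) (x : ℝ) :
    HasDerivAt (phi σ c)
      ((0 * (σ^2*(c*x)^2+1) - 2*c*(σ+1) * (σ^2*c^2*(2*x))) / (σ^2*(c*x)^2+1)^2
        * (1/(2*σ)) * (g σ c x) ^ (1/(2*σ) - 1)) x := by
  have h := (hasDerivAt_g (σ := σ) (c := c) x).rpow_const
    (p := 1/(2*σ)) (Or.inl (g_pos hσ hc x).ne')
  exact h

lemma integrable_g {σ c : ℝ} (hσ : 0 < σ) (hc : 0 < c) : Integrable (g σ c) := by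
  have h1 : Integrable (fun y : ℝ => (1 + y^2)⁻¹) := integrable_inv_one_add_sq
  have h2 : Integrable (fun x : ℝ => (1 + ((σ*c)*x)^2)⁻¹) :=
    h1.comp_mul_left' (by positivity)
  have h3 := h2.const_mul (2*c*(σ+1))
  refine h3.congr ?_
  filter_upwards with x
  unfold g
  rw [div_eq_mul_inv, show σ^2*(c*x)^2+1 = 1 + ((σ*c)*x)^2 by ring]

lemma continuous_g {σ c : ℝ} : Continuous (g σ c) :=
  continuous_const.div (by continuity) (fun x => (denom_pos σ c x).ne')

lemma hasDerivAt_F {σ c : ℝ} (hσ : 0 < σ) (hc : 0 < c) (x : ℝ) :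
    HasDerivAt (fun x => ∫ y in Set.Iio x, (phi σ c y) ^ (2*σ)) (g σ c x) x := by
  have hint := integrable_g hσ hc
  have hpe : (fun x : ℝ => ∫ y in Set.Iio x, (phi σ c y) ^ (2*σ))
      = fun x : ℝ => (∫ y in (0:ℝ)..x, g σ c y) + ∫ y in Set.Iio (0:ℝ), g σ c y := by
    funext z
    have h1 : ∀ y, (phi σ c y) ^ (2*σ) = g σ c y := phi_rpow hσ hc
    simp_rw [h1]
    rw [← integral_Iic_eq_integral_Iio, ← integral_Iic_eq_integral_Iio,
      ← intervalIntegral.integral_Iic_sub_Iic hint.integrableOn hint.integrableOn]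
    ring
  rw [hpe]
  exact (intervalIntegral.integral_hasDerivAt_right hint.intervalIntegrable
    (continuous_g.stronglyMeasurableAtFilter _ _) continuous_g.continuousAt).add_const _

end Stmt10Aux

open Stmt10Aux in
theorem stmt10 (σ c : ℝ) (hσ : σ ∈ Set.Ioo (1:ℝ) 2) (hc : 0 < c) :
    (∫ x : ℝ, ‖deriv (Phi σ c) x‖^2) = (c^2/4) * ∫ x : ℝ, ‖Phi σ c x‖^2 := by
  obtain ⟨hσ1, _⟩ := hσ
  have hσ0 : 0 < σ := lt_trans one_pos hσ1
  set F : ℝ → ℝ := fun x => ∫ y in Set.Iio x, (phi σ c y) ^ (2*σ) with hF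
  set θ : ℝ → ℝ := fun x => (c/2)*x - (F x)/(2*σ+2) with hθdef
  have hσ2ne : (2*σ+2 : ℝ) ≠ 0 := by positivity
  -- rewrite Phi in polar form
  have hPhiEq : Phi σ c = fun x => (phi σ c x : ℂ) * Complex.exp ((θ x : ℝ) * Complex.I) := by
    funext x
    unfold Phi
    congr 1
    have hFx : ((∫ y in Set.Iio x, (phi σ c y) ^ (2*σ) : ℝ) : ℂ) = ((F x : ℝ) : ℂ) := rfl
    rw [hFx, hθdef]
    have h2 : ((2:ℂ)*σ + 2) ≠ 0 := by
      simpa using (Complex.ofReal_ne_zero.mpr hσ2ne)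
    push_cast
    field_simp
  -- the phase derivative
  have hθ' : ∀ x, HasDerivAt θ (c/2 - g σ c x/(2*σ+2)) x := by
    intro x
    have h1 : HasDerivAt (fun x : ℝ => (c/2)*x) (c/2) x := by
      simpa using (hasDerivAt_id x).const_mul (c/2)
    exact h1.sub ((hasDerivAt_F hσ0 hc x).div_const (2*σ+2))
  -- derivative of Phi
  have hPhi' : ∀ x, HasDerivAt (Phi σ c)
      ((((0 * (σ^2*(c*x)^2+1) - 2*c*(σ+1) * (σ^2*c^2*(2*x))) / (σ^2*(c*x)^2+1)^2
          * (1/(2*σ)) * (g σ c x) ^ (1/(2*σ) - 1) : ℝ) : ℂ)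
        * Complex.exp ((θ x : ℝ) * Complex.I)
        + ((phi σ c x * (c/2 - g σ c x/(2*σ+2)) : ℝ) : ℂ) * Complex.I
          * Complex.exp ((θ x : ℝ) * Complex.I)) x := by
    intro x
    rw [hPhiEq]
    have h1 := (hasDerivAt_phi hσ0 hc x).ofReal_comp
    have h2 := (((hθ' x).ofReal_comp).mul_const Complex.I).cexp
    have h : HasDerivAt (fun x => (phi σ c x : ℂ) * Complex.exp ((θ x : ℝ) * Complex.I)) _ x :=
      h1.mul h2
    convert h using 1
    push_cast
    ring
  -- pointwise key identity
  have key : ∀ x, ‖deriv (Phi σ c) x‖^2 = c^2/4 * ‖Phi σ c x‖^2 := by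
    intro x
    rw [(hPhi' x).deriv]
    set φ' : ℝ := (0 * (σ^2*(c*x)^2+1) - 2*c*(σ+1) * (σ^2*c^2*(2*x))) / (σ^2*(c*x)^2+1)^2
        * (1/(2*σ)) * (g σ c x) ^ (1/(2*σ) - 1) with hφ'def
    have hnorm1 : ‖(φ' : ℂ) * Complex.exp ((θ x : ℝ) * Complex.I)
        + ((phi σ c x * (c/2 - g σ c x/(2*σ+2)) : ℝ) : ℂ) * Complex.I
          * Complex.exp ((θ x : ℝ) * Complex.I)‖^2
        = φ'^2 + (phi σ c x * (c/2 - g σ c x/(2*σ+2)))^2 := by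
      rw [show (φ' : ℂ) * Complex.exp ((θ x : ℝ) * Complex.I)
          + ((phi σ c x * (c/2 - g σ c x/(2*σ+2)) : ℝ) : ℂ) * Complex.I
            * Complex.exp ((θ x : ℝ) * Complex.I)
          = ((φ' : ℂ) + ((phi σ c x * (c/2 - g σ c x/(2*σ+2)) : ℝ) : ℂ) * Complex.I)
            * Complex.exp ((θ x : ℝ) * Complex.I) by ring]
      rw [norm_mul,
        Complex.norm_exp_ofReal_mul_I, mul_one, Complex.sq_norm,
        Complex.normSq_add_mul_I]
    rw [hnorm1]
    have hnorm2 : ‖Phi σ c x‖^2 = (phi σ c x)^2 := by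
      rw [hPhiEq]
      simp only [norm_mul, Complex.norm_exp_ofReal_mul_I, mul_one,
        Complex.norm_real, Real.norm_eq_abs]
      rw [abs_of_pos (phi_pos hσ0 hc x)]
    rw [hnorm2]
    -- algebra
    set d : ℝ := σ^2*(c*x)^2+1 with hddef
    have hd0 : 0 < d := denom_pos σ c x
    set t : ℝ := g σ c x with htdef
    have ht0 : 0 < t := g_pos hσ0 hc x
    set P : ℝ := t ^ (1/(2*σ)) with hPdef
    set Q : ℝ := t ^ (1/(2*σ) - 1) with hQdef
    have hphiP : phi σ c x = P := rfl
    have hQP : Q * t = P := by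
      rw [hQdef, hPdef, ← Real.rpow_add_one ht0.ne' (1/(2*σ) - 1)]
      norm_num
    have ht : t = 2*c*(σ+1)/d := rfl
    have hφ'' : φ' = (0 * d - 2*c*(σ+1) * (σ^2*c^2*(2*x))) / d^2 * (1/(2*σ)) * Q := rfl
    rw [hphiP, hφ'']
    have hbracket : ((0 * d - 2*c*(σ+1) * (σ^2*c^2*(2*x))) / d^2 * (1/(2*σ)))^2
        + (c/2 - t/(2*σ+2))^2 * t^2 = c^2/4 * t^2 := by
      rw [ht]
      field_simp
      ring
    have hQt : Q = P / t := by
      rw [← hQP]; field_simp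
    rw [hQt]
    have hP2 : ((0 * d - 2*c*(σ+1) * (σ^2*c^2*(2*x))) / d^2 * (1/(2*σ)) * (P/t))^2
        = ((0 * d - 2*c*(σ+1) * (σ^2*c^2*(2*x))) / d^2 * (1/(2*σ)))^2 * P^2 / t^2 := by
      field_simp
    rw [hP2]
    have : (((0 * d - 2*c*(σ+1) * (σ^2*c^2*(2*x))) / d^2 * (1/(2*σ)))^2
        + (c/2 - t/(2*σ+2))^2 * t^2) * P^2 / t^2 = c^2/4 * t^2 * P^2 / t^2 := by
      rw [hbracket]
    calc ((0 * d - 2*c*(σ+1) * (σ^2*c^2*(2*x))) / d^2 * (1/(2*σ)))^2 * P^2 / t^2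
          + (P * (c/2 - t/(2*σ+2)))^2
        = (((0 * d - 2*c*(σ+1) * (σ^2*c^2*(2*x))) / d^2 * (1/(2*σ)))^2
            + (c/2 - t/(2*σ+2))^2 * t^2) * P^2 / t^2 := by
          field_simp
      _ = c^2/4 * t^2 * P^2 / t^2 := this
      _ = c^2/4 * P^2 := by field_simp
  simp_rw [key]
  rw [MeasureTheory.integral_const_mul]
end
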